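/- For every integer n ≥ 8 with n ≠ 11, Right wins the Forbidden Leaf Variant of the Mixed Deletion Game on the path P_n regardless of which player moves first; i.e., the game value of P_n is strictly negative. -/

import Mathlib

universe u

namespace SetTheory

/-- Re-creation of Mathlib's (Dec 2024) `SetTheory.PGame`, removed from current Mathlib. -/
inductive PGame : Type (u + 1)
  | mk : ∀ α β : Type u, (α → PGame) → (β → PGame) → PGame

namespace PGame

/-- `x` is an immediate option of `y`. -/
inductive IsOption : PGame.{u} → PGame.{u} → Prop
  | moveLeft (xl xr : Type u) (xL : xl → PGame) (xR : xr → PGame) (i : xl) :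
      IsOption (xL i) (mk xl xr xL xR)
  | moveRight (xl xr : Type u) (xL : xl → PGame) (xR : xr → PGame) (j : xr) :
      IsOption (xR j) (mk xl xr xL xR)

theorem wf_isOption : WellFounded IsOption.{u} :=
  ⟨fun x => by
    induction x with
    | mk l r L R ihL ihR =>
      constructor
      intro y h
      cases h with
      | moveLeft => exact ihL _
      | moveRight => exact ihR _⟩

instance : WellFoundedRelation PGame.{u} := ⟨IsOption, wf_isOption⟩

/-- Simultaneous definition of `≤` (first component) and `⧏` (second component). -/
def leLF : PGame.{u} → PGame.{u} → Prop × Prop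
  | mk xl xr xL xR, mk yl yr yL yR =>
    ((∀ i, (leLF (xL i) (mk yl yr yL yR)).2) ∧ ∀ j, (leLF (mk xl xr xL xR) (yR j)).2,
      (∃ i, (leLF (mk xl xr xL xR) (yL i)).1) ∨ ∃ j, (leLF (xR j) (mk yl yr yL yR)).1)
termination_by x y => (x, y)
decreasing_by
  · exact Prod.Lex.left _ _ (IsOption.moveLeft _ _ _ _ _)
  · exact Prod.Lex.right _ (IsOption.moveRight _ _ _ _ _)
  · exact Prod.Lex.right _ (IsOption.moveLeft _ _ _ _ _)
  · exact Prod.Lex.left _ _ (IsOption.moveRight _ _ _ _ _)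

instance : LE PGame.{u} := ⟨fun x y => (leLF x y).1⟩

/-- The less or fuzzy relation: `x ⧏ y` iff `¬ y ≤ x`. -/
def LF (x y : PGame.{u}) : Prop := ¬y ≤ x

instance : LT PGame.{u} := ⟨fun x y => x ≤ y ∧ LF x y⟩

instance : Zero PGame.{u} := ⟨⟨PEmpty, PEmpty, PEmpty.elim, PEmpty.elim⟩⟩

instance : One PGame.{u} := ⟨⟨PUnit, PEmpty, fun _ => 0, PEmpty.elim⟩⟩

/-- Negation of a pre-game: swap the roles of the players. -/
def neg : PGame.{u} → PGame.{u}
  | ⟨l, r, L, R⟩ => ⟨r, l, fun i => neg (R i), fun i => neg (L i)⟩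

instance : Neg PGame.{u} := ⟨neg⟩

/-- Disjunctive sum of pre-games. -/
def add : PGame.{u} → PGame.{u} → PGame.{u}
  | mk xl xr xL xR, mk yl yr yL yR =>
    mk (xl ⊕ yl) (xr ⊕ yr)
      (Sum.elim (fun i => add (xL i) (mk yl yr yL yR)) (fun i => add (mk xl xr xL xR) (yL i)))
      (Sum.elim (fun j => add (xR j) (mk yl yr yL yR)) (fun j => add (mk xl xr xL xR) (yR j)))
termination_by x y => (x, y)
decreasing_by
  · exact Prod.Lex.left _ _ (IsOption.moveLeft _ _ _ _ _)
  · exact Prod.Lex.right _ (IsOption.moveLeft _ _ _ _ _)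
  · exact Prod.Lex.left _ _ (IsOption.moveRight _ _ _ _ _)
  · exact Prod.Lex.right _ (IsOption.moveRight _ _ _ _ _)

instance : Add PGame.{u} := ⟨add⟩

/-- The game `star = {0 | 0}`. -/
def star : PGame.{u} := ⟨PUnit, PUnit, fun _ => 0, fun _ => 0⟩

/-- The nim heap `*n` (for a natural number `n`): both players may move to `*m` for `m < n`. -/
def nim (n : ℕ) : PGame.{u} :=
  ⟨ULift (Fin n), ULift (Fin n), fun i => nim i.down.val, fun i => nim i.down.val⟩
termination_by n
decreasing_by
  · exact i.down.isLt
  · exact i.down.isLt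

end PGame

end SetTheory

infixl:50 " ⧏ " => SetTheory.PGame.LF

open SetTheory PGame

namespace MixedDeletion

/-- The degree of a vertex `v` with respect to an edge set `E`. -/
def deg (E : Finset (Sym2 ℕ)) (v : ℕ) : ℕ := (E.filter (fun e => v ∈ e)).card

/-- The graph position with vertex set `V` and edge set `E` has no isolated vertex. -/
def NoIsol (V : Finset ℕ) (E : Finset (Sym2 ℕ)) : Prop := ∀ v ∈ V, 0 < deg E v

/-- Result of Left deleting the vertex `v`: remove `v` and all incident edges. -/
def delV (V : Finset ℕ) (E : Finset (Sym2 ℕ)) (v : ℕ) : Finset ℕ × Finset (Sym2 ℕ) :=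
  (V.erase v, E.filter (fun e => v ∉ e))

/-- Left may legally delete vertex `v` under the base (Classic) rules:
`v` is a vertex and the deletion creates no isolated vertex. -/
def LeftOK (V : Finset ℕ) (E : Finset (Sym2 ℕ)) (v : ℕ) : Prop :=
  v ∈ V ∧ NoIsol (V.erase v) (E.filter (fun e => v ∉ e))

/-- Right may legally delete edge `e` under the base (Classic) rules:
`e` is an edge and the deletion creates no isolated vertex. -/
def RightOK (V : Finset ℕ) (E : Finset (Sym2 ℕ)) (e : Sym2 ℕ) : Prop :=
  e ∈ E ∧ NoIsol V (E.erase e)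

/-- The Classic Variant of the Mixed Deletion Game, as a partizan game:
Left deletes a vertex (and incident edges), Right deletes an edge,
and no move may create an isolated vertex. -/
def classicG : Finset ℕ → Finset (Sym2 ℕ) → PGame
  | V, E =>
    PGame.mk {v : ℕ // LeftOK V E v} {e : Sym2 ℕ // RightOK V E e}
      (fun x => classicG (V.erase x.val) (E.filter (fun e => x.val ∉ e)))
      (fun x => classicG V (E.erase x.val))
  termination_by V E => V.card + E.card
  decreasing_by
  · have h1 : (V.erase x.val).card < V.card := Finset.card_erase_lt_of_mem x.2.1
    have h2 : (E.filter (fun e => x.val ∉ e)).card ≤ E.card := Finset.card_filter_le _ _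
    omega
  · have h1 : (E.erase x.val).card < E.card := Finset.card_erase_lt_of_mem x.2.1
    omega

/-- The Forbidden Leaf Variant: as the Classic Variant, but Left may not
delete leaf vertices (vertices of degree one). -/
def flG : Finset ℕ → Finset (Sym2 ℕ) → PGame
  | V, E =>
    PGame.mk {v : ℕ // LeftOK V E v ∧ deg E v ≠ 1} {e : Sym2 ℕ // RightOK V E e}
      (fun x => flG (V.erase x.val) (E.filter (fun e => x.val ∉ e)))
      (fun x => flG V (E.erase x.val))
  termination_by V E => V.card + E.card
  decreasing_by
  · have h1 : (V.erase x.val).card < V.card := Finset.card_erase_lt_of_mem x.2.1.1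
    have h2 : (E.filter (fun e => x.val ∉ e)).card ≤ E.card := Finset.card_filter_le _ _
    omega
  · have h1 : (E.erase x.val).card < E.card := Finset.card_erase_lt_of_mem x.2.1
    omega

/-- The Mutual Failures Variant: as the Classic Variant, but in any graph
position a player has a legal move if and only if the opponent does; i.e. a
base-rules move is legal only if the opponent also has a base-rules move. -/
def mfG : Finset ℕ → Finset (Sym2 ℕ) → PGame
  | V, E =>
    PGame.mk {v : ℕ // LeftOK V E v ∧ ∃ e, RightOK V E e}
      {e : Sym2 ℕ // RightOK V E e ∧ ∃ v, LeftOK V E v}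
      (fun x => mfG (V.erase x.val) (E.filter (fun e => x.val ∉ e)))
      (fun x => mfG V (E.erase x.val))
  termination_by V E => V.card + E.card
  decreasing_by
  · have h1 : (V.erase x.val).card < V.card := Finset.card_erase_lt_of_mem x.2.1.1
    have h2 : (E.filter (fun e => x.val ∉ e)).card ≤ E.card := Finset.card_filter_le _ _
    omega
  · have h1 : (E.erase x.val).card < E.card := Finset.card_erase_lt_of_mem x.2.1.1
    omega

/-- Edge set of the path graph on vertices `0, 1, …, n-1`. -/
def pathE (n : ℕ) : Finset (Sym2 ℕ) := (Finset.range (n - 1)).image (fun i => s(i, i + 1))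

/-- Edge set of the cycle graph on vertices `0, 1, …, n-1`. -/
def cycleE (n : ℕ) : Finset (Sym2 ℕ) := (Finset.range n).image (fun i => s(i, (i + 1) % n))

/-- Edge set of the complete graph on vertices `0, 1, …, n-1`. -/
def completeE (n : ℕ) : Finset (Sym2 ℕ) := (Finset.range n).sym2.filter (fun e => ¬ e.IsDiag)

/-- The path position `P_n` in the Classic Variant. -/
def classicPath (n : ℕ) : PGame := classicG (Finset.range n) (pathE n)

/-- The cycle position `C_n` in the Classic Variant. -/
def classicCycle (n : ℕ) : PGame := classicG (Finset.range n) (cycleE n)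

/-- The complete graph position `K_n` in the Classic Variant. -/
def classicComplete (n : ℕ) : PGame := classicG (Finset.range n) (completeE n)

/-- The path position `P_n` in the Forbidden Leaf Variant. -/
def flPath (n : ℕ) : PGame := flG (Finset.range n) (pathE n)

/-- The cycle position `C_n` in the Forbidden Leaf Variant. -/
def flCycle (n : ℕ) : PGame := flG (Finset.range n) (cycleE n)

/-- The complete graph position `K_n` in the Forbidden Leaf Variant. -/
def flComplete (n : ℕ) : PGame := flG (Finset.range n) (completeE n)

/-- The path position `P_n` in the Mutual Failures Variant. -/
def mfPath (n : ℕ) : PGame := mfG (Finset.range n) (pathE n)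

/-- The cycle position `C_n` in the Mutual Failures Variant. -/
def mfCycle (n : ℕ) : PGame := mfG (Finset.range n) (cycleE n)

/-- The complete graph position `K_n` in the Mutual Failures Variant. -/
def mfComplete (n : ℕ) : PGame := mfG (Finset.range n) (completeE n)

/-- The partizan game equal to a natural number `n`. -/
def natPG : ℕ → PGame
  | 0 => 0
  | n + 1 => natPG n + 1

/-- The partizan game equal to an integer `z`. -/
def intPG (z : ℤ) : PGame := if 0 ≤ z then natPG z.toNat else -natPG (-z).toNat

/-- The game up, `↑ = {0 | *}`. -/
def up : PGame := PGame.mk PUnit PUnit (fun _ => 0) (fun _ => star)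

/-- The game down, `↓ = {* | 0}`. -/
def down : PGame := -up

/-- The sum of `n` copies of up. -/
def natUp : ℕ → PGame
  | 0 => 0
  | n + 1 => natUp n + up

/-- The game `z·↑`: `|z|` copies of up if `z ≥ 0`, and `|z|` copies of down otherwise. -/
def zUp (z : ℤ) : PGame := if 0 ≤ z then natUp z.toNat else -natUp (-z).toNat

/-- Two games have the same outcome: Left wins moving first in one iff in the other,
and Right wins moving first in one iff in the other. -/
def SameOutcome (A B : PGame) : Prop := (0 ⧏ A ↔ 0 ⧏ B) ∧ (A ⧏ 0 ↔ B ⧏ 0)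

/-- Far-star equivalence: `G + X + ✶` and `H + X + ✶` have the same outcome for
every game `X`, where `✶` (far star) is any nim-heap `*k` with `k ≥ 2`. -/
def FarStarEquiv (G H : PGame) : Prop :=
  ∀ (X : PGame) (k : ℕ), 2 ≤ k → SameOutcome (G + X + nim k) (H + X + nim k)

/-- `G` has atomic weight `z` if `G` is far-star equivalent to `z·↑`. -/
def AtomicWeight (G : PGame) (z : ℤ) : Prop := FarStarEquiv G (zUp z)

/-- A game is all-small if in every subposition Left has a move iff Right has a move. -/
def AllSmall : PGame → Prop
  | PGame.mk l r L R =>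
    (Nonempty l ↔ Nonempty r) ∧ (∀ i, AllSmall (L i)) ∧ (∀ j, AllSmall (R j))

end MixedDeletion

namespace SetTheory.PGame

def LeftMoves : PGame.{u} → Type u
  | mk l _ _ _ => l

def RightMoves : PGame.{u} → Type u
  | mk _ r _ _ => r

def moveLeft : (g : PGame.{u}) → LeftMoves g → PGame.{u}
  | mk _ _ L _ => L

def moveRight : (g : PGame.{u}) → RightMoves g → PGame.{u}
  | mk _ _ _ R => R

@[simp] theorem moveLeft_mk {xl xr : Type u} {xL : xl → PGame.{u}} {xR : xr → PGame.{u}} (i : xl) :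
    (mk xl xr xL xR).moveLeft i = xL i := rfl

@[simp] theorem moveRight_mk {xl xr : Type u} {xL : xl → PGame.{u}} {xR : xr → PGame.{u}} (j : xr) :
    (mk xl xr xL xR).moveRight j = xR j := rfl

theorem le_zero {x : PGame.{u}} : x ≤ 0 ↔ ∀ i, ∃ j, (x.moveLeft i).moveRight j ≤ 0 := by
  cases x with
  | mk xl xr xL xR =>
    show (leLF (mk xl xr xL xR) (mk PEmpty PEmpty PEmpty.elim PEmpty.elim)).1 ↔ _
    rw [leLF]
    simp only [IsEmpty.forall_iff, and_true]
    refine forall_congr' fun i => ?_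
    show _ ↔ ∃ j, (xL i).moveRight j ≤ 0
    generalize xL i = y
    cases y with
    | mk yl yr yL yR =>
      rw [leLF]
      simp only [IsEmpty.exists_iff, false_or]
      rfl

theorem zero_le {x : PGame.{u}} : 0 ≤ x ↔ ∀ j, ∃ i, 0 ≤ (x.moveRight j).moveLeft i := by
  cases x with
  | mk xl xr xL xR =>
    show (leLF (mk PEmpty PEmpty PEmpty.elim PEmpty.elim) (mk xl xr xL xR)).1 ↔ _
    rw [leLF]
    simp only [IsEmpty.forall_iff, true_and]
    refine forall_congr' fun j => ?_
    show _ ↔ ∃ i, 0 ≤ (xR j).moveLeft i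
    generalize xR j = y
    cases y with
    | mk yl yr yL yR =>
      rw [leLF]
      simp only [IsEmpty.exists_iff, or_false]
      rfl

theorem lt_iff_le_and_lf {x y : PGame.{u}} : x < y ↔ x ≤ y ∧ x ⧏ y := Iff.rfl

theorem not_le {x y : PGame.{u}} : ¬ x ≤ y ↔ y ⧏ x := Iff.rfl

end SetTheory.PGame

namespace MixedDeletion

lemma exists_add_not_mem (S : Finset ℕ) (a : ℕ) : ∃ k, a + k ∉ S := by
  refine ⟨S.sup id + 1, fun h => ?_⟩
  have := Finset.le_sup (f := id) h
  simp only [id] at this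
  omega

/-- Length of the run of consecutive elements of `S` starting at `a`. -/
def runlen (S : Finset ℕ) (a : ℕ) : ℕ := Nat.find (exists_add_not_mem S a)

lemma runlen_spec (S : Finset ℕ) (a : ℕ) : a + runlen S a ∉ S := Nat.find_spec (exists_add_not_mem S a)

lemma mem_of_lt_runlen {S : Finset ℕ} {a k : ℕ} (h : k < runlen S a) : a + k ∈ S := by
  have := Nat.find_min (exists_add_not_mem S a) h
  simpa using this

lemma runlen_eq {S : Finset ℕ} {a L : ℕ} (h1 : ∀ k < L, a + k ∈ S) (h2 : a + L ∉ S) :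
    runlen S a = L := by
  refine le_antisymm (Nat.find_le h2) ?_
  by_contra h
  push_neg at h
  exact runlen_spec S a (h1 _ h)

lemma runlen_pos {S : Finset ℕ} {a : ℕ} (h : a ∈ S) : 1 ≤ runlen S a := by
  rcases Nat.eq_zero_or_pos (runlen S a) with h0 | h' 
  · exfalso
    have := runlen_spec S a
    rw [h0] at this
    simp only [Nat.add_zero] at this
    exact this h
  · exact h'

lemma lt_runlen_iff {S : Finset ℕ} {a m : ℕ} : m < runlen S a ↔ ∀ k ≤ m, a + k ∈ S := by
  rw [runlen, Nat.lt_find_iff]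
  simp

/-- The set of starting points of runs of `S`. -/
def starts (S : Finset ℕ) : Finset ℕ := S.filter (fun a => ∀ b ∈ S, b + 1 ≠ a)

lemma mem_starts {S : Finset ℕ} {a : ℕ} : a ∈ starts S ↔ a ∈ S ∧ ∀ b ∈ S, b + 1 ≠ a :=
  Finset.mem_filter

/-- The multiset of run lengths of `S`. -/
def runs (S : Finset ℕ) : Multiset ℕ := Multiset.map (runlen S) (starts S).val

lemma start_exists {S : Finset ℕ} : ∀ i, i ∈ S → ∃ a ∈ starts S, ∃ k, a + k = i ∧ k < runlen S a := by
  intro i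
  induction i using Nat.strong_induction_on with
  | _ i IH =>
    intro h
    by_cases hs : ∀ b ∈ S, b + 1 ≠ i
    · exact ⟨i, mem_starts.2 ⟨h, hs⟩, 0, by omega, by have := runlen_pos h; omega⟩
    · push_neg at hs
      obtain ⟨b, hb, hbi⟩ := hs
      obtain ⟨a, ha, k, hk, hkr⟩ := IH b (by omega) hb
      refine ⟨a, ha, k + 1, by omega, ?_⟩
      rw [lt_runlen_iff]
      intro j hj
      rcases Nat.lt_or_ge j (k + 1) with h' | h'
      · exact mem_of_lt_runlen (by omega)
      · have e : a + j = i := by omega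
        rw [e]; exact h

lemma start_unique {S : Finset ℕ} {a b x : ℕ} (ha : a ∈ starts S) (hb : b ∈ starts S)
    (hax : ∃ k, a + k = x ∧ k < runlen S a) (hbx : ∃ k, b + k = x ∧ k < runlen S b) :
    a = b := by
  obtain ⟨k, hk, hkr⟩ := hax
  obtain ⟨l, hl, hlr⟩ := hbx
  by_contra hne
  rcases Nat.lt_or_ge a b with h' | h'
  · have hm : a + (b - 1 - a) ∈ S := mem_of_lt_runlen (by omega)
    exact (mem_starts.1 hb).2 _ hm (by omega)
  · have h'' : b < a := by omega
    have hm : b + (a - 1 - b) ∈ S := mem_of_lt_runlen (by omega)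
    exact (mem_starts.1 ha).2 _ hm (by omega)

lemma runs_remove {S : Finset ℕ} {a L1 t L2 : ℕ}
    (ha : a ∈ starts S) (hL1 : 1 ≤ L1) (hL2 : 1 ≤ L2) (ht : 1 ≤ t)
    (hsum : runlen S a = L1 + t + L2) :
    runs (S.filter (fun j => j < a + L1 ∨ a + L1 + t ≤ j)) =
      L1 ::ₘ L2 ::ₘ (runs S).erase (runlen S a) := by
  set i := a + L1 with hi
  set S' := S.filter (fun j => j < i ∨ i + t ≤ j) with hS'
  have haS : a ∈ S := (mem_starts.1 ha).1
  have hrun : ∀ k, k < L1 + t + L2 → a + k ∈ S := fun k hk => mem_of_lt_runlen (by omega)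
  have hout : a + (L1 + t + L2) ∉ S := by rw [← hsum]; exact runlen_spec S a
  have hmemS' : ∀ x, x ∈ S' ↔ x ∈ S ∧ (x < i ∨ i + t ≤ x) := by
    intro x; simp [hS', Finset.mem_filter]
  have hitS : i + t ∈ S := by
    have e : i + t = a + (L1 + t) := by omega
    rw [e]; exact hrun _ (by omega)
  have hnotmem : i + t ∉ starts S := by
    rw [mem_starts]
    push_neg
    intro _
    exact ⟨a + (L1 + t - 1), hrun _ (by omega), by omega⟩
  have hstarts' : starts S' = insert (i + t) (starts S) := by
    ext x
    rw [Finset.mem_insert, mem_starts, mem_starts, hmemS']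
    constructor
    · rintro ⟨⟨hxS, hside⟩, hst⟩
      by_cases hx : x = i + t
      · exact Or.inl hx
      · refine Or.inr ⟨hxS, fun b hb hb1 => ?_⟩
        by_cases hbS' : b < i ∨ i + t ≤ b
        · exact hst b ((hmemS' b).2 ⟨hb, hbS'⟩) hb1
        · omega
    · rintro (hx | ⟨hxS, hst⟩)
      · subst hx
        refine ⟨⟨hitS, Or.inr le_rfl⟩, fun b hb hb1 => ?_⟩
        rw [hmemS'] at hb
        omega
      · refine ⟨⟨hxS, ?_⟩, fun b hb hb1 => hst b ((hmemS' b).1 hb).1 hb1⟩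
        by_contra hside
        exact hst (a + (x - 1 - a)) (hrun _ (by omega)) (by omega)
  have hc3 : runlen S' a = L1 := by
    apply runlen_eq
    · intro k hk
      exact (hmemS' _).2 ⟨hrun k (by omega), Or.inl (by omega)⟩
    · intro hmem
      rw [hmemS'] at hmem
      omega
  have hc2 : runlen S' (i + t) = L2 := by
    apply runlen_eq
    · intro k hk
      refine (hmemS' _).2 ⟨?_, Or.inr (by omega)⟩
      have e : i + t + k = a + (L1 + t + k) := by omega
      rw [e]; exact hrun _ (by omega)
    · intro hmem
      rw [hmemS'] at hmem
      refine hout ?_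
      have h1 := hmem.1
      rwa [show i + t + L2 = a + (L1 + t + L2) from by omega] at h1
  have hc4 : ∀ x, x ∈ starts S → x ≠ a → runlen S' x = runlen S x := by
    intro x hx hxa
    have hdisj : ∀ k, k < runlen S x → (x + k < i ∨ i + t ≤ x + k) := by
      intro k hk
      by_contra hcon
      exact hxa (start_unique hx ha ⟨k, rfl, hk⟩ ⟨x + k - a, by omega, by omega⟩)
    apply runlen_eq
    · intro k hk
      exact (hmemS' _).2 ⟨mem_of_lt_runlen hk, hdisj k hk⟩
    · intro hmem
      rw [hmemS'] at hmem
      exact runlen_spec S x hmem.1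
  have hval : (starts S').val = (i + t) ::ₘ (starts S).val := by
    rw [hstarts']
    exact Finset.insert_val_of_notMem hnotmem
  have haval : (starts S).val = a ::ₘ ((starts S).val.erase a) :=
    (Multiset.cons_erase (Finset.mem_def.1 ha)).symm
  have hcongr : Multiset.map (runlen S') ((starts S).val.erase a) =
      Multiset.map (runlen S) ((starts S).val.erase a) := by
    apply Multiset.map_congr rfl
    intro x hx
    have hxa : x ≠ a := ((Multiset.Nodup.mem_erase_iff (starts S).nodup).1 hx).1
    have hxs : x ∈ starts S := Multiset.mem_of_mem_erase hx
    exact hc4 x hxs hxa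
  show runs S' = _
  conv_lhs => rw [runs, hval]
  rw [Multiset.map_cons, hc2]
  conv_lhs => rw [haval]
  rw [Multiset.map_cons, hc3, hcongr]
  conv_rhs => rw [runs]
  conv_rhs => rw [haval]
  rw [Multiset.map_cons, Multiset.erase_cons_head, Multiset.cons_swap]

lemma runs_remove_interior {S : Finset ℕ} {i t : ℕ} (ht : 1 ≤ t)
    (hprev : ∃ u, u + 1 = i ∧ u ∈ S) (hblock : ∀ k ≤ t, i + k ∈ S) :
    ∃ L L1 L2, L ∈ runs S ∧ 1 ≤ L1 ∧ 1 ≤ L2 ∧ L1 + t + L2 = L ∧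
      runs (S.filter (fun j => j < i ∨ i + t ≤ j)) = L1 ::ₘ L2 ::ₘ (runs S).erase L := by
  obtain ⟨u, hu1, huS⟩ := hprev
  obtain ⟨a, ha, k, hak, hkr⟩ := start_exists u huS
  have hbig : k + 1 + t < runlen S a := by
    rw [lt_runlen_iff]
    intro j hj
    rcases le_or_gt j k with h' | h'
    · exact mem_of_lt_runlen (by omega)
    · have e : a + j = i + (j - (k + 1)) := by omega
      rw [e]; exact hblock _ (by omega)
  refine ⟨runlen S a, k + 1, runlen S a - (k + 1) - t,
    Multiset.mem_map_of_mem _ (Finset.mem_def.1 ha), by omega, by omega, by omega, ?_⟩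
  have h := runs_remove (L1 := k + 1) (L2 := runlen S a - (k + 1) - t) ha
    (by omega) (by omega) ht (by omega)
  rwa [show a + (k + 1) = i from by omega] at h

lemma exists_block {S : Finset ℕ} {L : ℕ} (hL : L ∈ runs S) (L1 L2 t : ℕ)
    (h1 : 1 ≤ L1) (h2 : 1 ≤ L2) (ht : 1 ≤ t) (hsum : L1 + t + L2 = L) :
    ∃ i, (∃ u, u + 1 = i ∧ u ∈ S) ∧ (∀ k ≤ t, i + k ∈ S) ∧
      runs (S.filter (fun j => j < i ∨ i + t ≤ j)) = L1 ::ₘ L2 ::ₘ (runs S).erase L := by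
  obtain ⟨a, haval, haL⟩ := Multiset.mem_map.1 hL
  have ha : a ∈ starts S := haval
  refine ⟨a + L1, ⟨a + (L1 - 1), by omega, mem_of_lt_runlen (by omega)⟩, ?_, ?_⟩
  · intro k hk
    have e : a + L1 + k = a + (L1 + k) := by omega
    rw [e]; exact mem_of_lt_runlen (by omega)
  · have h := runs_remove ha h1 h2 ht (by omega)
    rwa [haL] at h

lemma erase_eq_filter (S : Finset ℕ) (i : ℕ) :
    S.erase i = S.filter (fun j => j < i ∨ i + 1 ≤ j) := by
  ext x
  simp only [Finset.mem_erase, Finset.mem_filter]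
  constructor
  · rintro ⟨h1, h2⟩; exact ⟨h2, by omega⟩
  · rintro ⟨h1, h2⟩; exact ⟨by omega, h1⟩



/-- The edge set associated to a set of edge indices. -/
def eS (S : Finset ℕ) : Finset (Sym2 ℕ) := S.image (fun i => s(i, i + 1))

/-- The vertex support of a set of edge indices. -/
def vS (S : Finset ℕ) : Finset ℕ := S.biUnion (fun i => {i, i + 1})

lemma edge_inj : Function.Injective (fun i : ℕ => s(i, i + 1)) := by
  intro i j h
  simp only at h
  rw [Sym2.eq_iff] at h
  omega

lemma mem_vS {S : Finset ℕ} {v : ℕ} : v ∈ vS S ↔ ∃ i ∈ S, v = i ∨ v = i + 1 := by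
  simp [vS]

lemma mem_eS {S : Finset ℕ} {e : Sym2 ℕ} : e ∈ eS S ↔ ∃ i ∈ S, s(i, i + 1) = e := by
  simp [eS]

lemma deg_eS (S : Finset ℕ) (v : ℕ) :
    deg (eS S) v = (S.filter (fun i => v = i ∨ v = i + 1)).card := by
  rw [deg, eS, Finset.filter_image]
  rw [Finset.card_image_of_injective _ edge_inj]
  congr 1
  apply Finset.filter_congr
  intro i _
  exact Sym2.mem_iff

lemma deg_pos_iff {S : Finset ℕ} {v : ℕ} :
    0 < deg (eS S) v ↔ ∃ i ∈ S, v = i ∨ v = i + 1 := by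
  rw [deg_eS, Finset.card_pos]
  constructor
  · rintro ⟨i, hi⟩
    rw [Finset.mem_filter] at hi
    exact ⟨i, hi.1, hi.2⟩
  · rintro ⟨i, hi1, hi2⟩
    exact ⟨i, Finset.mem_filter.2 ⟨hi1, hi2⟩⟩

lemma noIsol_vS (S : Finset ℕ) : NoIsol (vS S) (eS S) := by
  intro v hv
  exact deg_pos_iff.2 (mem_vS.1 hv)

lemma deg_two_iff {S : Finset ℕ} {v : ℕ} :
    (0 < deg (eS S) v ∧ deg (eS S) v ≠ 1) ↔ ((∃ u, u + 1 = v ∧ u ∈ S) ∧ v ∈ S) := by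
  rw [deg_eS]
  constructor
  · rintro ⟨hpos, hne⟩
    have h2 : 1 < (S.filter (fun i => v = i ∨ v = i + 1)).card := by omega
    obtain ⟨a, ha, b, hb, hab⟩ := Finset.one_lt_card.1 h2
    rw [Finset.mem_filter] at ha hb
    obtain ⟨haS, hav⟩ := ha
    obtain ⟨hbS, hbv⟩ := hb
    rcases hav with h1 | h1 <;> rcases hbv with h2' | h2'
    · omega
    · refine ⟨⟨b, by omega, hbS⟩, by rwa [h1]⟩
    · refine ⟨⟨a, by omega, haS⟩, by rwa [h2']⟩
    · omega
  · rintro ⟨⟨u, huv, huS⟩, hvS⟩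
    have hsub : ({u, v} : Finset ℕ) ⊆ S.filter (fun i => v = i ∨ v = i + 1) := by
      intro x hx
      rw [Finset.mem_insert, Finset.mem_singleton] at hx
      rcases hx with rfl | rfl
      · exact Finset.mem_filter.2 ⟨huS, Or.inr (by omega)⟩
      · exact Finset.mem_filter.2 ⟨hvS, Or.inl rfl⟩
    have hcard : ({u, v} : Finset ℕ).card = 2 := by
      rw [Finset.card_insert_of_notMem (by simp; omega), Finset.card_singleton]
    have := Finset.card_le_card hsub
    omega

lemma filter_ext {S : Finset ℕ} {p q : ℕ → Prop} [DecidablePred p] [DecidablePred q]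
    (h : ∀ j, p j ↔ q j) : S.filter p = S.filter q := by
  apply Finset.filter_congr
  intro i _
  exact h i

lemma eS_filter_block {S : Finset ℕ} (u : ℕ) :
    (eS S).filter (fun e => (u + 2) ∉ e) =
      eS (S.filter (fun j => j < u + 1 ∨ u + 1 + 2 ≤ j)) := by
  rw [eS, eS, Finset.filter_image]
  congr 1
  apply Finset.filter_congr
  intro i _
  simp only [Sym2.mem_iff]
  constructor
  · intro h
    push_neg at h
    omega
  · intro h
    push_neg
    omega

lemma eS_erase {S : Finset ℕ} (i : ℕ) :
    (eS S).erase (s(i, i + 1)) = eS (S.erase i) := by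
  rw [eS, eS, ← Finset.image_erase edge_inj]

lemma vS_erase_right {S : Finset ℕ} {i u : ℕ} (hu : u + 1 = i) (huS : u ∈ S)
    (hi1 : i + 1 ∈ S) : vS S = vS (S.erase i) := by
  ext x
  simp only [mem_vS, Finset.mem_erase]
  constructor
  · rintro ⟨j, hjS, hx⟩
    by_cases hji : j = i
    · subst hji
      rcases hx with rfl | rfl
      · exact ⟨u, ⟨by omega, huS⟩, Or.inr (by omega)⟩
      · exact ⟨j + 1, ⟨by omega, hi1⟩, Or.inl rfl⟩
    · exact ⟨j, ⟨hji, hjS⟩, hx⟩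
  · rintro ⟨j, ⟨hji, hjS⟩, hx⟩
    exact ⟨j, hjS, hx⟩

lemma vS_erase_left {S : Finset ℕ} {u : ℕ} (h0 : u ∈ S) (h3 : u + 3 ∈ S) :
    (vS S).erase (u + 2) = vS (S.filter (fun j => j < u + 1 ∨ u + 1 + 2 ≤ j)) := by
  ext x
  simp only [mem_vS, Finset.mem_erase, Finset.mem_filter]
  constructor
  · rintro ⟨hxv, j, hjS, hx⟩
    by_cases hj : j < u + 1 ∨ u + 1 + 2 ≤ j
    · exact ⟨j, ⟨hjS, hj⟩, hx⟩
    · rcases hx with rfl | rfl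
      · exact ⟨u, ⟨h0, by omega⟩, by omega⟩
      · exact ⟨u + 3, ⟨h3, by omega⟩, by omega⟩
  · rintro ⟨j, ⟨hjS, hj⟩, hx⟩
    refine ⟨by omega, j, hjS, hx⟩

lemma rightOK_iff {S : Finset ℕ} {e : Sym2 ℕ} :
    RightOK (vS S) (eS S) e ↔
      ∃ i, s(i, i + 1) = e ∧ i ∈ S ∧ i + 1 ∈ S ∧ ∃ u, u + 1 = i ∧ u ∈ S := by
  constructor
  · rintro ⟨heE, hno⟩
    obtain ⟨i, hiS, rfl⟩ := mem_eS.1 heE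
    refine ⟨i, rfl, hiS, ?_, ?_⟩
    · have hv : i + 1 ∈ vS S := mem_vS.2 ⟨i, hiS, Or.inr rfl⟩
      have hd := hno _ hv
      rw [eS_erase] at hd
      obtain ⟨j, hj, hx⟩ := deg_pos_iff.1 hd
      rw [Finset.mem_erase] at hj
      rcases hx with h | h
      · rw [h]; exact hj.2
      · omega
    · have hv : i ∈ vS S := mem_vS.2 ⟨i, hiS, Or.inl rfl⟩
      have hd := hno _ hv
      rw [eS_erase] at hd
      obtain ⟨j, hj, hx⟩ := deg_pos_iff.1 hd
      rw [Finset.mem_erase] at hj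
      rcases hx with h | h
      · exact absurd h.symm hj.1
      · exact ⟨j, h.symm, hj.2⟩
  · rintro ⟨i, rfl, hiS, hi1, u, hu, huS⟩
    refine ⟨mem_eS.2 ⟨i, hiS, rfl⟩, ?_⟩
    intro w hw
    rw [eS_erase]
    apply deg_pos_iff.2
    obtain ⟨j, hjS, hx⟩ := mem_vS.1 hw
    by_cases hji : j = i
    · subst hji
      rcases hx with rfl | rfl
      · exact ⟨u, Finset.mem_erase.2 ⟨by omega, huS⟩, Or.inr (by omega)⟩
      · exact ⟨j + 1, Finset.mem_erase.2 ⟨by omega, hi1⟩, Or.inl rfl⟩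
    · exact ⟨j, Finset.mem_erase.2 ⟨hji, hjS⟩, hx⟩

lemma leftOK_iff {S : Finset ℕ} {v : ℕ} :
    (LeftOK (vS S) (eS S) v ∧ deg (eS S) v ≠ 1) ↔
      ∃ u, u + 2 = v ∧ u ∈ S ∧ u + 1 ∈ S ∧ u + 2 ∈ S ∧ u + 3 ∈ S := by
  constructor
  · rintro ⟨⟨hv, hno⟩, hdeg⟩
    have hpos : 0 < deg (eS S) v := deg_pos_iff.2 (mem_vS.1 hv)
    obtain ⟨⟨u1, hu1, hu1S⟩, hvS⟩ := deg_two_iff.1 ⟨hpos, hdeg⟩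
    -- v = u1 + 1, u1 ∈ S, v ∈ S.  Examine vertices v + 1 and u1 after the deletion.
    have hfilt : (eS S).filter (fun e => v ∉ e) =
        eS (S.filter (fun j => j + 1 < v ∨ v + 1 ≤ j)) := by
      rw [eS, eS, Finset.filter_image]
      congr 1
      apply Finset.filter_congr
      intro i _
      simp only [Sym2.mem_iff]
      constructor
      · intro h; push_neg at h; omega
      · intro h; push_neg; omega
    have hv1 : v + 1 ∈ (vS S).erase v := by
      rw [Finset.mem_erase]
      exact ⟨by omega, mem_vS.2 ⟨v, hvS, Or.inr rfl⟩⟩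
    have hd1 := hno _ hv1
    rw [hfilt] at hd1
    obtain ⟨j, hj, hx⟩ := deg_pos_iff.1 hd1
    rw [Finset.mem_filter] at hj
    have hv1S : v + 1 ∈ S := by
      rcases hx with h | h
      · rw [h]; exact hj.1
      · omega
    have hu1' : u1 ∈ (vS S).erase v := by
      rw [Finset.mem_erase]
      exact ⟨by omega, mem_vS.2 ⟨u1, hu1S, Or.inl rfl⟩⟩
    have hd2 := hno _ hu1'
    rw [hfilt] at hd2
    obtain ⟨k, hk, hkx⟩ := deg_pos_iff.1 hd2
    rw [Finset.mem_filter] at hk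
    have hkk : u1 = k + 1 := by
      rcases hkx with h | h
      · omega
      · exact h
    refine ⟨k, by omega, hk.1, ?_, ?_, ?_⟩
    · rw [show k + 1 = u1 from by omega]; exact hu1S
    · rw [show k + 2 = v from by omega]; exact hvS
    · rw [show k + 3 = v + 1 from by omega]; exact hv1S
  · rintro ⟨u, huv, h0, h1, h2, h3⟩
    subst huv
    have hfilt : (eS S).filter (fun e => (u + 2) ∉ e) =
        eS (S.filter (fun j => j < u + 1 ∨ u + 1 + 2 ≤ j)) := eS_filter_block u
    refine ⟨⟨mem_vS.2 ⟨u + 2, h2, Or.inl rfl⟩, ?_⟩, ?_⟩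
    · intro w hw
      rw [hfilt]
      rw [vS_erase_left h0 h3] at hw
      exact noIsol_vS _ _ hw
    · have := deg_two_iff.2 ⟨⟨u + 1, by omega, h1⟩, h2⟩
      exact this.2

/-! Packaged move data. -/

lemma left_move_data {S : Finset ℕ} {v : ℕ}
    (h : LeftOK (vS S) (eS S) v ∧ deg (eS S) v ≠ 1) :
    ∃ S₁ L L1 L2, S₁ ⊂ S ∧ (vS S).erase v = vS S₁ ∧
      (eS S).filter (fun e => v ∉ e) = eS S₁ ∧
      L ∈ runs S ∧ 1 ≤ L1 ∧ 1 ≤ L2 ∧ L1 + 2 + L2 = L ∧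
      runs S₁ = L1 ::ₘ L2 ::ₘ (runs S).erase L := by
  obtain ⟨u, huv, h0, h1, h2, h3⟩ := leftOK_iff.1 h
  subst huv
  set S₁ := S.filter (fun j => j < u + 1 ∨ u + 1 + 2 ≤ j) with hS₁
  have hblock : ∀ k ≤ 2, u + 1 + k ∈ S := by
    intro k hk
    have hcase : u + 1 + k = u + 1 ∨ u + 1 + k = u + 2 ∨ u + 1 + k = u + 3 := by omega
    rcases hcase with h | h | h <;> rw [h] <;> assumption
  obtain ⟨L, L1, L2, hLm, h11, h12, hs, hruns⟩ :=
    runs_remove_interior (S := S) (i := u + 1) (t := 2) (by omega) ⟨u, rfl, h0⟩ hblock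
  refine ⟨S₁, L, L1, L2, ?_, vS_erase_left h0 h3, eS_filter_block u, hLm, h11, h12, hs, ?_⟩
  · refine Finset.ssubset_iff_of_subset (Finset.filter_subset _ _) |>.2 ⟨u + 1, h1, ?_⟩
    intro hx
    rw [Finset.mem_filter] at hx
    omega
  · exact hruns

lemma right_move_data {S : Finset ℕ} {e : Sym2 ℕ} (h : RightOK (vS S) (eS S) e) :
    ∃ S₁ L L1 L2, S₁ ⊂ S ∧ vS S = vS S₁ ∧ (eS S).erase e = eS S₁ ∧
      L ∈ runs S ∧ 1 ≤ L1 ∧ 1 ≤ L2 ∧ L1 + 1 + L2 = L ∧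
      runs S₁ = L1 ::ₘ L2 ::ₘ (runs S).erase L := by
  obtain ⟨i, rfl, hiS, hi1, u, hu, huS⟩ := rightOK_iff.1 h
  have hblock : ∀ k ≤ 1, i + k ∈ S := by
    intro k hk
    have hcase : i + k = i ∨ i + k = i + 1 := by omega
    rcases hcase with h' | h' <;> rw [h'] <;> assumption
  obtain ⟨L, L1, L2, hLm, h11, h12, hs, hruns⟩ :=
    runs_remove_interior (S := S) (i := i) (t := 1) (by omega) ⟨u, hu, huS⟩ hblock
  refine ⟨S.erase i, L, L1, L2, Finset.erase_ssubset hiS, vS_erase_right hu huS hi1,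
    eS_erase i, hLm, h11, h12, hs, ?_⟩
  rw [erase_eq_filter]
  exact hruns

lemma left_move_exists {S : Finset ℕ} {L L1 L2 : ℕ} (hL : L ∈ runs S)
    (h1 : 1 ≤ L1) (h2 : 1 ≤ L2) (hs : L1 + 2 + L2 = L) :
    ∃ v S₁, (LeftOK (vS S) (eS S) v ∧ deg (eS S) v ≠ 1) ∧ S₁ ⊂ S ∧
      (vS S).erase v = vS S₁ ∧ (eS S).filter (fun e => v ∉ e) = eS S₁ ∧
      runs S₁ = L1 ::ₘ L2 ::ₘ (runs S).erase L := by
  obtain ⟨i, ⟨u, hu, huS⟩, hblock, hruns⟩ := exists_block hL L1 L2 2 h1 h2 (by omega) hs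
  subst hu
  have h1' : u + 1 ∈ S := by have := hblock 0 (by omega); simpa using this
  have h2' : u + 2 ∈ S := by have := hblock 1 (by omega); rwa [show u + 1 + 1 = u + 2 from rfl] at this
  have h3' : u + 3 ∈ S := by have := hblock 2 (by omega); rwa [show u + 1 + 2 = u + 3 from by omega] at this
  refine ⟨u + 2, S.filter (fun j => j < u + 1 ∨ u + 1 + 2 ≤ j),
    leftOK_iff.2 ⟨u, rfl, huS, h1', h2', h3'⟩, ?_, vS_erase_left huS h3',
    eS_filter_block u, ?_⟩
  · refine Finset.ssubset_iff_of_subset (Finset.filter_subset _ _) |>.2 ⟨u + 1, h1', ?_⟩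
    intro hx
    rw [Finset.mem_filter] at hx
    omega
  · rwa [show u + 1 + 2 = u + 1 + 2 from rfl] at hruns

lemma right_move_exists {S : Finset ℕ} {L L1 L2 : ℕ} (hL : L ∈ runs S)
    (h1 : 1 ≤ L1) (h2 : 1 ≤ L2) (hs : L1 + 1 + L2 = L) :
    ∃ e S₁, RightOK (vS S) (eS S) e ∧ S₁ ⊂ S ∧ vS S = vS S₁ ∧
      (eS S).erase e = eS S₁ ∧ runs S₁ = L1 ::ₘ L2 ::ₘ (runs S).erase L := by
  obtain ⟨i, ⟨u, hu, huS⟩, hblock, hruns⟩ := exists_block hL L1 L2 1 h1 h2 (by omega) hs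
  have h0' : i ∈ S := by have := hblock 0 (by omega); simpa using this
  have h1' : i + 1 ∈ S := hblock 1 (by omega)
  refine ⟨s(i, i + 1), S.erase i, rightOK_iff.2 ⟨i, rfl, h0', h1', u, hu, huS⟩,
    Finset.erase_ssubset h0', vS_erase_right hu huS h1', eS_erase i, ?_⟩
  rw [erase_eq_filter]
  exact hruns

def chiA (r : ℕ) : ℕ := if r = 3 ∨ r = 9 ∨ 11 ≤ r then 1 else 0
def chiB (r : ℕ) : ℕ := if r = 4 then 1 else 0
def chiC (r : ℕ) : ℕ := if r = 5 ∨ r = 6 ∨ r = 10 then 1 else 0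
def chiD (r : ℕ) : ℕ := if r = 7 ∨ r = 8 then 1 else 0
def chiBig (r : ℕ) : ℕ := if 3 ≤ r then 1 else 0

lemma chiA_spec (r : ℕ) : (chiA r = 1 ∧ (r = 3 ∨ r = 9 ∨ 11 ≤ r)) ∨
    (chiA r = 0 ∧ ¬(r = 3 ∨ r = 9 ∨ 11 ≤ r)) := by
  unfold chiA; split_ifs with h
  · exact Or.inl ⟨rfl, h⟩
  · exact Or.inr ⟨rfl, h⟩

lemma chiB_spec (r : ℕ) : (chiB r = 1 ∧ r = 4) ∨ (chiB r = 0 ∧ r ≠ 4) := by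
  unfold chiB; split_ifs with h
  · exact Or.inl ⟨rfl, h⟩
  · exact Or.inr ⟨rfl, h⟩

lemma chiC_spec (r : ℕ) : (chiC r = 1 ∧ (r = 5 ∨ r = 6 ∨ r = 10)) ∨
    (chiC r = 0 ∧ ¬(r = 5 ∨ r = 6 ∨ r = 10)) := by
  unfold chiC; split_ifs with h
  · exact Or.inl ⟨rfl, h⟩
  · exact Or.inr ⟨rfl, h⟩

lemma chiD_spec (r : ℕ) : (chiD r = 1 ∧ (r = 7 ∨ r = 8)) ∨ (chiD r = 0 ∧ ¬(r = 7 ∨ r = 8)) := by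
  unfold chiD; split_ifs with h
  · exact Or.inl ⟨rfl, h⟩
  · exact Or.inr ⟨rfl, h⟩

lemma chiBig_spec (r : ℕ) : (chiBig r = 1 ∧ 3 ≤ r) ∨ (chiBig r = 0 ∧ r ≤ 2) := by
  unfold chiBig; split_ifs with h
  · exact Or.inl ⟨rfl, h⟩
  · exact Or.inr ⟨rfl, by omega⟩

lemma chi_small {r : ℕ} (h : r ≤ 2) :
    chiA r = 0 ∧ chiB r = 0 ∧ chiC r = 0 ∧ chiD r = 0 := by
  unfold chiA chiB chiC chiD
  split_ifs <;> omega

def nA (M : Multiset ℕ) : ℕ := (M.map chiA).sum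
def nB (M : Multiset ℕ) : ℕ := (M.map chiB).sum
def nC (M : Multiset ℕ) : ℕ := (M.map chiC).sum
def nD (M : Multiset ℕ) : ℕ := (M.map chiD).sum
def nBig (M : Multiset ℕ) : ℕ := (M.map chiBig).sum

lemma nA_cons (r : ℕ) (M : Multiset ℕ) : nA (r ::ₘ M) = chiA r + nA M := by simp [nA]
lemma nB_cons (r : ℕ) (M : Multiset ℕ) : nB (r ::ₘ M) = chiB r + nB M := by simp [nB]
lemma nC_cons (r : ℕ) (M : Multiset ℕ) : nC (r ::ₘ M) = chiC r + nC M := by simp [nC]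
lemma nD_cons (r : ℕ) (M : Multiset ℕ) : nD (r ::ₘ M) = chiD r + nD M := by simp [nD]

lemma nA_erase {M : Multiset ℕ} {L : ℕ} (hL : L ∈ M) : nA M = chiA L + nA (M.erase L) := by
  have h := nA_cons L (M.erase L); rwa [Multiset.cons_erase hL] at h
lemma nB_erase {M : Multiset ℕ} {L : ℕ} (hL : L ∈ M) : nB M = chiB L + nB (M.erase L) := by
  have h := nB_cons L (M.erase L); rwa [Multiset.cons_erase hL] at h
lemma nC_erase {M : Multiset ℕ} {L : ℕ} (hL : L ∈ M) : nC M = chiC L + nC (M.erase L) := by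
  have h := nC_cons L (M.erase L); rwa [Multiset.cons_erase hL] at h
lemma nD_erase {M : Multiset ℕ} {L : ℕ} (hL : L ∈ M) : nD M = chiD L + nD (M.erase L) := by
  have h := nD_cons L (M.erase L); rwa [Multiset.cons_erase hL] at h

lemma exists_chi_pos {f : ℕ → ℕ} {M : Multiset ℕ} (h : 1 ≤ (M.map f).sum) :
    ∃ x ∈ M, 1 ≤ f x := by
  by_contra hc
  push_neg at hc
  have hz : (M.map f).sum = 0 := by
    apply Multiset.sum_eq_zero
    intro y hy
    obtain ⟨x, hx, rfl⟩ := Multiset.mem_map.1 hy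
    have := hc x hx
    omega
  omega

lemma chi_zero_of_sum_zero {f : ℕ → ℕ} {M : Multiset ℕ} (h : (M.map f).sum = 0) :
    ∀ x ∈ M, f x = 0 := by
  intro x hx
  have hm : f x ∈ M.map f := Multiset.mem_map_of_mem f hx
  exact Multiset.sum_eq_zero_iff.1 h _ hm

lemma one_le_nA_of_mem {M : Multiset ℕ} {x : ℕ} (hx : x ∈ M) (h : chiA x = 1) :
    1 ≤ nA M := by
  have := nA_erase hx; omega

lemma mem_erase_swap {M : Multiset ℕ} {a b : ℕ} (ha : a ∈ M) (hb : b ∈ M.erase a) :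
    a ∈ M.erase b := by
  by_cases hab : a = b
  · subst hab; exact hb
  · exact (Multiset.mem_erase_of_ne hab).2 ha

def Phi1 (M : Multiset ℕ) : Prop :=
  nA M = 0 ∧ ((nB M % 2 = 1 ∧ nC M = 0 ∧ nD M ≤ 1) ∨ (nB M % 2 = 0 ∧ nC M = 1 ∧ nD M = 0))

def Phi2 (M : Multiset ℕ) : Prop := nA M = 0 ∧ nB M % 2 = 0 ∧ nC M = 0 ∧ nD M = 0

def Psi (M : Multiset ℕ) : Prop := 1 ≤ nA M ∨ (nB M % 2 = 0 ∧ nC M = 0 ∧ nD M = 0)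

lemma lemA {M : Multiset ℕ} {L L1 L2 : ℕ} (h2 : Phi2 M) (hL : L ∈ M)
    (h11 : 1 ≤ L1) (h12 : 1 ≤ L2) (hs : L1 + 1 + L2 = L) :
    Phi1 (L1 ::ₘ L2 ::ₘ M.erase L) := by
  obtain ⟨hA, hB, hC, hD⟩ := h2
  have eA := nA_erase hL; have eB := nB_erase hL
  have eC := nC_erase hL; have eD := nD_erase hL
  have hL4 : L = 4 := by
    have t1 := chiA_spec L; have t7 := chiC_spec L; have t10 := chiD_spec L
    omega
  subst hL4
  have c4 : chiA 4 = 0 ∧ chiB 4 = 1 ∧ chiC 4 = 0 ∧ chiD 4 = 0 := by decide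
  have c1 := chi_small (r := L1) (by omega)
  have c2 := chi_small (r := L2) (by omega)
  simp only [Phi1, nA_cons, nB_cons, nC_cons, nD_cons]
  omega

lemma lemC {M : Multiset ℕ} {L L1 L2 : ℕ} (hL : L ∈ M)
    (h11 : 1 ≤ L1) (h12 : 1 ≤ L2) (hs : L1 + 2 + L2 = L)
    (h2 : Phi2 (L1 ::ₘ L2 ::ₘ M.erase L)) : Phi1 M := by
  simp only [Phi2, nA_cons, nB_cons, nC_cons, nD_cons] at h2
  obtain ⟨hA', hB', hC', hD'⟩ := h2
  have eA := nA_erase hL; have eB := nB_erase hL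
  have eC := nC_erase hL; have eD := nD_erase hL
  have g1 : L1 ≤ 2 ∨ L1 = 4 := by
    have a1 := chiA_spec L1; have a7 := chiC_spec L1; have a10 := chiD_spec L1
    omega
  have g2 : L2 ≤ 2 ∨ L2 = 4 := by
    have a1 := chiA_spec L2; have a7 := chiC_spec L2; have a10 := chiD_spec L2
    omega
  have b1 := chiB_spec L1; have b2 := chiB_spec L2
  have t1 := chiA_spec L; have t4 := chiB_spec L
  have t7 := chiC_spec L; have t10 := chiD_spec L
  simp only [Phi1]
  omega

lemma psi_not_phi1 {M : Multiset ℕ} (hψ : Psi M) (h1 : Phi1 M) : False := by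
  simp only [Psi, Phi1] at hψ h1
  omega

lemma lemF2 {M : Multiset ℕ} {L L1 L2 : ℕ} (hψ : Psi M) (hL : L ∈ M)
    (h11 : 1 ≤ L1) (h12 : 1 ≤ L2) (hs : L1 + 2 + L2 = L) :
    ¬ Phi2 (L1 ::ₘ L2 ::ₘ M.erase L) :=
  fun h2 => psi_not_phi1 hψ (lemC hL h11 h12 hs h2)

lemma lemD {M : Multiset ℕ} (h1 : Phi1 M) :
    ∃ L L1 L2, L ∈ M ∧ 1 ≤ L1 ∧ 1 ≤ L2 ∧ L1 + 2 + L2 = L ∧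
      Phi2 (L1 ::ₘ L2 ::ₘ M.erase L) := by
  obtain ⟨hA, hbr⟩ := h1
  have c1 := chi_small (r := 1) (by omega)
  have c2 := chi_small (r := 2) (by omega)
  have c4 : chiA 4 = 0 ∧ chiB 4 = 1 ∧ chiC 4 = 0 ∧ chiD 4 = 0 := by decide
  rcases hbr with ⟨hB, hC, hD⟩ | ⟨hB, hC, hD⟩
  · rcases Nat.eq_zero_or_pos (nD M) with hD0 | hD1
    · obtain ⟨L, hLm, hchi⟩ := exists_chi_pos (f := chiB) (M := M)
        (by show 1 ≤ nB M; omega)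
      have hL4 : L = 4 := by have := chiB_spec L; omega
      subst hL4
      refine ⟨4, 1, 1, hLm, le_refl 1, le_refl 1, by omega, ?_⟩
      have eA := nA_erase hLm; have eB := nB_erase hLm
      have eC := nC_erase hLm; have eD := nD_erase hLm
      simp only [Phi2, nA_cons, nB_cons, nC_cons, nD_cons]
      omega
    · obtain ⟨L, hLm, hchi⟩ := exists_chi_pos (f := chiD) (M := M)
        (by show 1 ≤ nD M; omega)
      have hL78 : L = 7 ∨ L = 8 := by have := chiD_spec L; omega
      have eA := nA_erase hLm; have eB := nB_erase hLm
      have eC := nC_erase hLm; have eD := nD_erase hLm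
      have c7 : chiA 7 = 0 ∧ chiB 7 = 0 ∧ chiC 7 = 0 ∧ chiD 7 = 1 := by decide
      have c8 : chiA 8 = 0 ∧ chiB 8 = 0 ∧ chiC 8 = 0 ∧ chiD 8 = 1 := by decide
      rcases hL78 with rfl | rfl
      · refine ⟨7, 1, 4, hLm, by omega, by omega, by omega, ?_⟩
        simp only [Phi2, nA_cons, nB_cons, nC_cons, nD_cons]
        omega
      · refine ⟨8, 2, 4, hLm, by omega, by omega, by omega, ?_⟩
        simp only [Phi2, nA_cons, nB_cons, nC_cons, nD_cons]
        omega
  · obtain ⟨L, hLm, hchi⟩ := exists_chi_pos (f := chiC) (M := M)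
      (by show 1 ≤ nC M; omega)
    have hLc : L = 5 ∨ L = 6 ∨ L = 10 := by have := chiC_spec L; omega
    have eA := nA_erase hLm; have eB := nB_erase hLm
    have eC := nC_erase hLm; have eD := nD_erase hLm
    have c5 : chiA 5 = 0 ∧ chiB 5 = 0 ∧ chiC 5 = 1 ∧ chiD 5 = 0 := by decide
    have c6 : chiA 6 = 0 ∧ chiB 6 = 0 ∧ chiC 6 = 1 ∧ chiD 6 = 0 := by decide
    have c10 : chiA 10 = 0 ∧ chiB 10 = 0 ∧ chiC 10 = 1 ∧ chiD 10 = 0 := by decide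
    rcases hLc with rfl | rfl | rfl
    · refine ⟨5, 1, 2, hLm, by omega, by omega, by omega, ?_⟩
      simp only [Phi2, nA_cons, nB_cons, nC_cons, nD_cons]
      omega
    · refine ⟨6, 2, 2, hLm, by omega, by omega, by omega, ?_⟩
      simp only [Phi2, nA_cons, nB_cons, nC_cons, nD_cons]
      omega
    · refine ⟨10, 4, 4, hLm, by omega, by omega, by omega, ?_⟩
      simp only [Phi2, nA_cons, nB_cons, nC_cons, nD_cons]
      omega

lemma lemBF {M : Multiset ℕ} (h : ¬ Phi2 M) :
    ∃ L L1 L2, L ∈ M ∧ 1 ≤ L1 ∧ 1 ≤ L2 ∧ L1 + 1 + L2 = L ∧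
      ¬ Phi1 (L1 ::ₘ L2 ::ₘ M.erase L) ∧ Psi (L1 ::ₘ L2 ::ₘ M.erase L) := by
  have c3 : chiA 3 = 1 := by decide
  by_cases hC : 1 ≤ nC M
  · obtain ⟨L, hLm, hchi⟩ := exists_chi_pos (f := chiC) (M := M) hC
    have hLc : L = 5 ∨ L = 6 ∨ L = 10 := by have := chiC_spec L; omega
    refine ⟨L, 3, L - 4, hLm, by omega, by omega, by omega, ?_, ?_⟩
    · intro h1
      have : 1 ≤ nA (3 ::ₘ (L - 4) ::ₘ M.erase L) :=
        one_le_nA_of_mem (Multiset.mem_cons_self _ _) c3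
      exact absurd h1.1 (by omega)
    · exact Or.inl (one_le_nA_of_mem (Multiset.mem_cons_self _ _) c3)
  · by_cases hD : 1 ≤ nD M
    · obtain ⟨L, hLm, hchi⟩ := exists_chi_pos (f := chiD) (M := M) hD
      have hLd : L = 7 ∨ L = 8 := by have := chiD_spec L; omega
      refine ⟨L, 3, L - 4, hLm, by omega, by omega, by omega, ?_, ?_⟩
      · intro h1
        have : 1 ≤ nA (3 ::ₘ (L - 4) ::ₘ M.erase L) :=
          one_le_nA_of_mem (Multiset.mem_cons_self _ _) c3
        exact absurd h1.1 (by omega)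
      · exact Or.inl (one_le_nA_of_mem (Multiset.mem_cons_self _ _) c3)
    · by_cases hA : 1 ≤ nA M
      · obtain ⟨L, hLm, hchiA⟩ := exists_chi_pos (f := chiA) (M := M) hA
        have hLa : L = 3 ∨ L = 9 ∨ 11 ≤ L := by have := chiA_spec L; omega
        by_cases h3 : 1 ≤ nBig (M.erase L)
        · obtain ⟨L', hL'm, hchiBig⟩ := exists_chi_pos (f := chiBig) (M := M.erase L) h3
          have hL'3 : 3 ≤ L' := by have := chiBig_spec L'; omega
          have hLmem' : L ∈ M.erase L' := mem_erase_swap hLm hL'm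
          have hAmem : 1 ≤ nA (1 ::ₘ (L' - 2) ::ₘ M.erase L') :=
            one_le_nA_of_mem
              (Multiset.mem_cons_of_mem (Multiset.mem_cons_of_mem hLmem'))
              (by have := chiA_spec L; omega)
          refine ⟨L', 1, L' - 2, Multiset.mem_of_mem_erase hL'm, le_refl 1, by omega,
            by omega, ?_, Or.inl hAmem⟩
          intro h1
          exact absurd h1.1 (by omega)
        · have hz : ∀ x ∈ M.erase L, chiBig x = 0 :=
            chi_zero_of_sum_zero (by show nBig (M.erase L) = 0; omega)
          have hsmall : ∀ x ∈ M.erase L, x ≤ 2 := by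
            intro x hx
            have h1 := hz x hx
            have := chiBig_spec x
            omega
          have hzero : nA (M.erase L) = 0 ∧ nB (M.erase L) = 0 ∧ nC (M.erase L) = 0 ∧
              nD (M.erase L) = 0 := by
            refine ⟨?_, ?_, ?_, ?_⟩ <;>
            · apply Multiset.sum_eq_zero
              intro y hy
              obtain ⟨x, hx, rfl⟩ := Multiset.mem_map.1 hy
              have hxs := hsmall x hx
              have := chi_small (r := x) hxs
              omega
          have c1 := chi_small (r := 1) (by omega)
          rcases hLa with h3' | h9 | h11
          · subst h3'
            refine ⟨3, 1, 1, hLm, le_refl 1, le_refl 1, by omega, ?_, ?_⟩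
            · intro h1
              rcases h1 with ⟨_, hbr⟩
              simp only [nB_cons, nC_cons, nD_cons] at hbr
              omega
            · refine Or.inr ?_
              simp only [nB_cons, nC_cons, nD_cons]
              omega
          · subst h9
            refine ⟨9, 3, 5, hLm, by omega, by omega, by omega, ?_, ?_⟩
            · intro h1
              have : 1 ≤ nA (3 ::ₘ 5 ::ₘ M.erase 9) :=
                one_le_nA_of_mem (Multiset.mem_cons_self _ _) c3
              exact absurd h1.1 (by omega)
            · exact Or.inl (one_le_nA_of_mem (Multiset.mem_cons_self _ _) c3)
          · refine ⟨L, 3, L - 4, hLm, by omega, by omega, by omega, ?_, ?_⟩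
            · intro h1
              have : 1 ≤ nA (3 ::ₘ (L - 4) ::ₘ M.erase L) :=
                one_le_nA_of_mem (Multiset.mem_cons_self _ _) c3
              exact absurd h1.1 (by omega)
            · exact Or.inl (one_le_nA_of_mem (Multiset.mem_cons_self _ _) c3)
      · have hBodd : nB M % 2 = 1 := by
          simp only [Phi2] at h
          omega
        obtain ⟨L, hLm, hchi⟩ := exists_chi_pos (f := chiB) (M := M)
          (by show 1 ≤ nB M; omega)
        have hL4 : L = 4 := by have := chiB_spec L; omega
        subst hL4
        have eA := nA_erase hLm; have eB := nB_erase hLm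
        have eC := nC_erase hLm; have eD := nD_erase hLm
        have c4 : chiA 4 = 0 ∧ chiB 4 = 1 ∧ chiC 4 = 0 ∧ chiD 4 = 0 := by decide
        have c1 := chi_small (r := 1) (by omega)
        have c2 := chi_small (r := 2) (by omega)
        refine ⟨4, 1, 2, hLm, le_refl 1, by omega, by omega, ?_, ?_⟩
        · simp only [Phi1, nA_cons, nB_cons, nC_cons, nD_cons]
          omega
        · simp only [Psi, nA_cons, nB_cons, nC_cons, nD_cons]
          omega


/-! Main induction. -/


theorem flG_char (S₀ : Finset ℕ) :
    (flG (vS S₀) (eS S₀) ≤ 0 ↔ ¬ Phi1 (runs S₀)) ∧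
      (0 ≤ flG (vS S₀) (eS S₀) ↔ Phi2 (runs S₀)) := by
  induction S₀ using Finset.strongInduction with
  | _ S IH =>
  have hsub2 : ∀ {T U : Finset ℕ}, T ⊂ U → U ⊂ S → T ⊂ S :=
    fun hTU hUS => hTU.trans hUS
  constructor
  · constructor
    · -- flG ≤ 0 → ¬Phi1
      intro hle h1
      obtain ⟨L, L1, L2, hLm, h11, h12, hs, hphi2⟩ := lemD h1
      obtain ⟨v, S₁, hOK, hsub, hV, hE, hruns⟩ := left_move_exists hLm h11 h12 hs
      have hphi2' : Phi2 (runs S₁) := by rw [hruns]; exact hphi2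
      rw [flG, PGame.le_zero] at hle
      have h := hle ⟨v, hOK⟩
      simp only [PGame.moveLeft_mk] at h
      rw [hV, hE] at h
      rw [flG] at h
      obtain ⟨⟨e, heOK⟩, hj⟩ := h
      simp only [PGame.moveRight_mk] at hj
      obtain ⟨S₂, L', L1', L2', hsub₂, hV₂, hE₂, hL'm, h11', h12', hs', hruns₂⟩ :=
        right_move_data heOK
      rw [hV₂, hE₂] at hj
      have hphi1₂ : Phi1 (runs S₂) := by
        rw [hruns₂]; exact lemA hphi2' hL'm h11' h12' hs'
      exact absurd ((IH S₂ (hsub2 hsub₂ hsub)).1.1 hj) (fun hn => hn hphi1₂)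
    · -- ¬Phi1 → flG ≤ 0
      intro h1
      rw [flG, PGame.le_zero]
      rintro ⟨v, hOK⟩
      obtain ⟨S₁, L, L1, L2, hsub, hV, hE, hLm, h11, h12, hs, hruns⟩ := left_move_data hOK
      simp only [PGame.moveLeft_mk]
      rw [hV, hE]
      have hnp2 : ¬ Phi2 (runs S₁) := by
        rw [hruns]; exact fun hq => h1 (lemC hLm h11 h12 hs hq)
      obtain ⟨L', L1', L2', hL'm, h11', h12', hs', hnphi1', _⟩ := lemBF hnp2
      obtain ⟨e, S₂, heOK, hsub₂, hV₂, hE₂, hruns₂⟩ := right_move_exists hL'm h11' h12' hs'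
      rw [flG]
      refine ⟨⟨e, heOK⟩, ?_⟩
      simp only [PGame.moveRight_mk]
      rw [hV₂, hE₂]
      exact (IH S₂ (hsub2 hsub₂ hsub)).1.2 (by rw [hruns₂]; exact hnphi1')
  · constructor
    · -- 0 ≤ flG → Phi2
      intro hle
      by_contra hn2
      obtain ⟨L, L1, L2, hLm, h11, h12, hs, hnphi1, hpsi⟩ := lemBF hn2
      obtain ⟨e, S₁, heOK, hsub, hV, hE, hruns⟩ := right_move_exists hLm h11 h12 hs
      have hpsi' : Psi (runs S₁) := by rw [hruns]; exact hpsi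
      rw [flG, PGame.zero_le] at hle
      have h := hle ⟨e, heOK⟩
      simp only [PGame.moveRight_mk] at h
      rw [hV, hE] at h
      rw [flG] at h
      obtain ⟨⟨v, hvOK⟩, hj⟩ := h
      simp only [PGame.moveLeft_mk] at hj
      obtain ⟨S₂, L', L1', L2', hsub₂, hV₂, hE₂, hL'm, h11', h12', hs', hruns₂⟩ :=
        left_move_data hvOK
      rw [hV₂, hE₂] at hj
      have hphi2₂ := (IH S₂ (hsub2 hsub₂ hsub)).2.1 hj
      rw [hruns₂] at hphi2₂
      exact lemF2 hpsi' hL'm h11' h12' hs' hphi2₂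
    · -- Phi2 → 0 ≤ flG
      intro h2
      rw [flG, PGame.zero_le]
      rintro ⟨e, heOK⟩
      obtain ⟨S₁, L, L1, L2, hsub, hV, hE, hLm, h11, h12, hs, hruns⟩ := right_move_data heOK
      simp only [PGame.moveRight_mk]
      rw [hV, hE]
      have hphi1 : Phi1 (runs S₁) := by rw [hruns]; exact lemA h2 hLm h11 h12 hs
      obtain ⟨L', L1', L2', hL'm, h11', h12', hs', hphi2'⟩ := lemD hphi1
      obtain ⟨v, S₂, hvOK, hsub₂, hV₂, hE₂, hruns₂⟩ := left_move_exists hL'm h11' h12' hs'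
      rw [flG]
      refine ⟨⟨v, hvOK⟩, ?_⟩
      simp only [PGame.moveLeft_mk]
      rw [hV₂, hE₂]
      exact (IH S₂ (hsub2 hsub₂ hsub)).2.2 (by rw [hruns₂]; exact hphi2')

/-! Initial position. -/

lemma vS_range {n : ℕ} (hn : 2 ≤ n) : vS (Finset.range (n - 1)) = Finset.range n := by
  ext x
  simp only [mem_vS, Finset.mem_range]
  constructor
  · rintro ⟨i, hi, h | h⟩ <;> omega
  · intro hx
    by_cases h : x < n - 1
    · exact ⟨x, h, Or.inl rfl⟩
    · exact ⟨x - 1, by omega, Or.inr (by omega)⟩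

lemma starts_range {m : ℕ} (hm : 1 ≤ m) : starts (Finset.range m) = {0} := by
  ext a
  rw [mem_starts]
  simp only [Finset.mem_range, Finset.mem_singleton]
  constructor
  · rintro ⟨ha, hst⟩
    by_contra h0
    exact hst (a - 1) (by omega) (by omega)
  · rintro rfl
    exact ⟨by omega, fun b hb => by omega⟩

lemma runs_range {m : ℕ} (hm : 1 ≤ m) : runs (Finset.range m) = {m} := by
  rw [runs, starts_range hm]
  have hr : runlen (Finset.range m) 0 = m := by
    apply runlen_eq
    · intro k hk
      simp only [Finset.mem_range]
      omega
    · simp only [Finset.mem_range]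
      omega
  rw [Finset.singleton_val, Multiset.map_singleton, hr]

lemma nA_singleton (m : ℕ) : nA {m} = chiA m := by simp [nA]
lemma nB_singleton (m : ℕ) : nB {m} = chiB m := by simp [nB]
lemma nC_singleton (m : ℕ) : nC {m} = chiC m := by simp [nC]
lemma nD_singleton (m : ℕ) : nD {m} = chiD m := by simp [nD]


/-- For every `n ≥ 8` with `n ≠ 11`, Right wins the Forbidden Leaf Variant on the
path `P_n` regardless of which player moves first, i.e. `P_n < 0`. -/
theorem fl_path_right_wins : ∀ n : ℕ, 8 ≤ n → n ≠ 11 → flPath n < 0 := by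
  intro n h8 h11
  have hchar := flG_char (Finset.range (n - 1))
  have hruns : runs (Finset.range (n - 1)) = {n - 1} := runs_range (by omega)
  have t1 := chiA_spec (n - 1); have t4 := chiB_spec (n - 1)
  have t7 := chiC_spec (n - 1); have t10 := chiD_spec (n - 1)
  have hnphi1 : ¬ Phi1 (runs (Finset.range (n - 1))) := by
    rw [hruns]
    simp only [Phi1, nA_singleton, nB_singleton, nC_singleton, nD_singleton]
    omega
  have hnphi2 : ¬ Phi2 (runs (Finset.range (n - 1))) := by
    rw [hruns]
    simp only [Phi2, nA_singleton, nB_singleton, nC_singleton, nD_singleton]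
    omega
  have hE : pathE n = eS (Finset.range (n - 1)) := rfl
  have hgame : flPath n = flG (vS (Finset.range (n - 1))) (eS (Finset.range (n - 1))) := by
    rw [flPath, hE, vS_range (show 2 ≤ n by omega)]
  rw [hgame, PGame.lt_iff_le_and_lf]
  exact ⟨hchar.1.2 hnphi1, PGame.not_le.1 (fun hle => hnphi2 (hchar.2.1 hle))⟩


end MixedDeletion
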